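/- arXiv:2403.12056 — 2 statements merged into one kernel-verified Lean document; each statement's English description precedes it below -/
import Mathlib

section
/- Let n ≥ 2 and fix an index, say 1. Let (L₁⁽ᵏ⁾, …, Lₙ⁽ᵏ⁾)_{k∈ℕ} be a sequence of n-tuples of strictly positive reals such that L₁⁽ᵏ⁾ → 0 as k → ∞, and there exist constants 0 < ε ≤ M with ε ≤ Lᵢ⁽ᵏ⁾ ≤ M for all k and all i ≠ 1. Define the reverse-attention weights Wᵢ⁽ᵏ⁾ = exp(1/Lᵢ⁽ᵏ⁾) / (∑_{j=1}^n exp(1/Lⱼ⁽ᵏ⁾)) and the reverse-attention loss L_ra⁽ᵏ⁾ = ∑_{i=1}^n Wᵢ⁽ᵏ⁾ Lᵢ⁽ᵏ⁾. Then L_ra⁽ᵏ⁾ → 0 as k → ∞. -/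
/-- paper's THEOREM 0: if along a sequence of tuples of strictly positive losses
the loss of a fixed candidate `i₀` tends to 0 while all other losses stay in `[ε, M]` with
`0 < ε ≤ M`, then the reverse-attention loss `L_ra = ∑ᵢ Wᵢ Lᵢ` tends to 0. -/
theorem reverse_attention_loss_tendsto_zero
    (n : ℕ) (hn : 2 ≤ n) (i₀ : Fin n) (L : ℕ → Fin n → ℝ)
    (hpos : ∀ k i, 0 < L k i)
    (h0 : Filter.Tendsto (fun k => L k i₀) Filter.atTop (nhds 0))
    (ε M : ℝ) (hε : 0 < ε) (hεM : ε ≤ M)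
    (hlb : ∀ k, ∀ i ≠ i₀, ε ≤ L k i) (hub : ∀ k, ∀ i ≠ i₀, L k i ≤ M) :
    Filter.Tendsto
      (fun k => ∑ i, (Real.exp (1 / L k i) / ∑ j, Real.exp (1 / L k j)) * L k i)
      Filter.atTop (nhds 0) := by
  have hfpos : ∀ k, 0 < L k i₀ := fun k => hpos k i₀
  have h1 : Filter.Tendsto (fun k => 1 / L k i₀) Filter.atTop Filter.atTop := by
    simp only [one_div]
    exact Filter.Tendsto.inv_tendsto_nhdsGT_zero
      (tendsto_nhdsWithin_of_tendsto_nhds_of_eventually_within _ h0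
        (Filter.Eventually.of_forall hfpos))
  have h2 : Filter.Tendsto (fun k => Real.exp (-(1 / L k i₀))) Filter.atTop (nhds 0) :=
    Real.tendsto_exp_atBot.comp (Filter.tendsto_neg_atBot_iff.mpr h1)
  have hg : Filter.Tendsto
      (fun k => L k i₀ + (n : ℝ) * M * Real.exp (1 / ε) * Real.exp (-(1 / L k i₀)))
      Filter.atTop (nhds 0) := by
    have := h0.add (h2.const_mul ((n : ℝ) * M * Real.exp (1 / ε)))
    simpa using this
  refine squeeze_zero (fun k => ?_) (fun k => ?_) hg
  · refine Finset.sum_nonneg fun i _ => ?_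
    have hS : 0 < ∑ j, Real.exp (1 / L k j) :=
      Finset.sum_pos (fun j _ => Real.exp_pos _) ⟨i₀, Finset.mem_univ _⟩
    exact mul_nonneg (div_nonneg (Real.exp_pos _).le hS.le) (hpos k i).le
  · have hSpos : 0 < ∑ j, Real.exp (1 / L k j) :=
      Finset.sum_pos (fun j _ => Real.exp_pos _) ⟨i₀, Finset.mem_univ _⟩
    have hSge : Real.exp (1 / L k i₀) ≤ ∑ j, Real.exp (1 / L k j) :=
      Finset.single_le_sum (f := fun j => Real.exp (1 / L k j)) (fun j _ => (Real.exp_pos _).le) (Finset.mem_univ i₀)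
    rw [← Finset.sum_erase_add _ _ (Finset.mem_univ i₀)]
    have hterm0 : Real.exp (1 / L k i₀) / (∑ j, Real.exp (1 / L k j)) * L k i₀ ≤ L k i₀ := by
      have hw : Real.exp (1 / L k i₀) / (∑ j, Real.exp (1 / L k j)) ≤ 1 :=
        div_le_one_of_le₀ hSge hSpos.le
      nlinarith [hfpos k, (Real.exp_pos (1 / L k i₀)).le, hSpos]
    have htermi : ∀ i ∈ Finset.univ.erase i₀,
        Real.exp (1 / L k i) / (∑ j, Real.exp (1 / L k j)) * L k i
          ≤ M * Real.exp (1 / ε) * Real.exp (-(1 / L k i₀)) := by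
      intro i hi
      have hne : i ≠ i₀ := Finset.ne_of_mem_erase hi
      have hLi : 0 < L k i := hpos k i
      have h1e : 1 / L k i ≤ 1 / ε := one_div_le_one_div_of_le hε (hlb k i hne)
      have hnum : Real.exp (1 / L k i) ≤ Real.exp (1 / ε) := Real.exp_le_exp.mpr h1e
      have hdiv : Real.exp (1 / L k i) / (∑ j, Real.exp (1 / L k j))
          ≤ Real.exp (1 / ε) / Real.exp (1 / L k i₀) :=
        div_le_div₀ (Real.exp_pos _).le hnum (Real.exp_pos _) hSge
      have hLM : L k i ≤ M := hub k i hne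
      calc Real.exp (1 / L k i) / (∑ j, Real.exp (1 / L k j)) * L k i
          ≤ Real.exp (1 / ε) / Real.exp (1 / L k i₀) * M := by
            apply mul_le_mul hdiv hLM hLi.le
            positivity
        _ = M * Real.exp (1 / ε) * Real.exp (-(1 / L k i₀)) := by
            rw [Real.exp_neg, div_eq_mul_inv]; ring
    have hsum : ∑ i ∈ Finset.univ.erase i₀,
        Real.exp (1 / L k i) / (∑ j, Real.exp (1 / L k j)) * L k i
          ≤ (Finset.univ.erase i₀).card • (M * Real.exp (1 / ε) * Real.exp (-(1 / L k i₀))) :=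
      Finset.sum_le_card_nsmul _ _ _ htermi
    have hcard : ((Finset.univ.erase i₀).card : ℝ) ≤ (n : ℝ) := by
      have := Finset.card_erase_le (a := i₀) (s := (Finset.univ : Finset (Fin n)))
      simp only [Finset.card_univ, Fintype.card_fin] at this
      exact_mod_cast this
    have hMexp : 0 ≤ M * Real.exp (1 / ε) * Real.exp (-(1 / L k i₀)) :=
      mul_nonneg (mul_nonneg (hε.trans_le hεM).le (Real.exp_pos _).le) (Real.exp_pos _).le
    have : ((Finset.univ.erase i₀).card : ℝ) * (M * Real.exp (1 / ε) * Real.exp (-(1 / L k i₀)))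
        ≤ (n : ℝ) * (M * Real.exp (1 / ε) * Real.exp (-(1 / L k i₀))) :=
      mul_le_mul_of_nonneg_right hcard hMexp
    rw [nsmul_eq_mul] at hsum
    calc (∑ i ∈ Finset.univ.erase i₀,
            Real.exp (1 / L k i) / (∑ j, Real.exp (1 / L k j)) * L k i)
          + Real.exp (1 / L k i₀) / (∑ j, Real.exp (1 / L k j)) * L k i₀
        ≤ (n : ℝ) * (M * Real.exp (1 / ε) * Real.exp (-(1 / L k i₀))) + L k i₀ := by
          exact add_le_add (hsum.trans this) hterm0
      _ = L k i₀ + (n : ℝ) * M * Real.exp (1 / ε) * Real.exp (-(1 / L k i₀)) := by ring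
end

section
/- Let E be a real inner product space and let f : E → ℝ be convex and differentiable with ∇f Lipschitz continuous with constant C > 0. Let 0 < t ≤ 1/C and let x* ∈ E be a minimizer of f. Then for every x ∈ E, the gradient step x⁺ = x − t∇f(x) satisfies f(x⁺) − f(x*) ≤ (1/(2t)) (‖x − x*‖² − ‖x⁺ − x*‖²). -/
open scoped RealInnerProductSpace

section aux
variable {E : Type*} [NormedAddCommGroup E] [InnerProductSpace ℝ E] [CompleteSpace E]

private lemma line_hasDerivAt (f : E → ℝ) (hdiff : Differentiable ℝ f) (x d : E) (s : ℝ) :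
    HasDerivAt (fun s : ℝ => f (x + s • d)) ⟪gradient f (x + s • d), d⟫ s := by
  have h1 : HasDerivAt (fun s : ℝ => x + s • d) d s := by
    simpa using ((hasDerivAt_id s).smul_const d).const_add x
  have h2 : HasGradientAt f (gradient f (x + s • d)) (x + s • d) :=
    (hdiff (x + s • d)).hasGradientAt
  have h3 := (hasGradientAt_iff_hasFDerivAt.mp h2).comp_hasDerivAt s h1
  exact h3

private lemma convex_lower (f : E → ℝ) (hconv : ConvexOn ℝ Set.univ f)
    (hdiff : Differentiable ℝ f) (x z : E) :
    f x + ⟪gradient f x, z - x⟫ ≤ f z := by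
  set d := z - x with hd
  have hφconv : ConvexOn ℝ Set.univ (fun s : ℝ => f (x + s • d)) := by
    have := hconv.comp_affineMap (AffineMap.lineMap x z)
    simp only [Set.preimage_univ] at this
    convert this using 2 with s
    case e'_12 =>
      simp [AffineMap.lineMap_apply, hd]
      abel
    all_goals rfl
  have hder := line_hasDerivAt f hdiff x d 0
  have hslope := hφconv.le_slope_of_hasDerivAt (Set.mem_univ 0) (Set.mem_univ 1)
    zero_lt_one hder
  rw [slope_def_field] at hslope
  simp only [zero_smul, add_zero, one_smul] at hslope hder ⊢
  have : ⟪gradient f x, d⟫ ≤ f (x + d) - f x := by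
    simpa using hslope
  have hxd : x + d = z := by simp [hd]
  rw [hxd] at this
  linarith

private lemma descent (f : E → ℝ) (hdiff : Differentiable ℝ f) (C : ℝ) (hC : 0 ≤ C)
    (hlip : ∀ x y : E, ‖gradient f x - gradient f y‖ ≤ C * ‖x - y‖) (x y : E) :
    f y ≤ f x + ⟪gradient f x, y - x⟫ + C / 2 * ‖y - x‖ ^ 2 := by
  set d := y - x with hd
  set φ' : ℝ → ℝ := fun s => ⟪gradient f (x + s • d), d⟫ with hφ'
  have hgradcont : Continuous (gradient f) := by
    have : LipschitzWith (Real.toNNReal C) (gradient f) := by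
      apply LipschitzWith.of_dist_le_mul
      intro a b
      rw [dist_eq_norm, dist_eq_norm, Real.coe_toNNReal C hC]
      exact hlip a b
    exact this.continuous
  have hcont : Continuous φ' := by
    apply Continuous.inner
    · exact hgradcont.comp (by continuity)
    · exact continuous_const
  have hder : ∀ s ∈ Set.uIcc (0:ℝ) 1, HasDerivAt (fun s => f (x + s • d)) (φ' s) s :=
    fun s _ => line_hasDerivAt f hdiff x d s
  have hint : IntervalIntegrable φ' MeasureTheory.volume 0 1 :=
    hcont.intervalIntegrable 0 1
  have hftc : ∫ s in (0:ℝ)..1, φ' s = f (x + (1:ℝ) • d) - f (x + (0:ℝ) • d) :=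
    intervalIntegral.integral_eq_sub_of_hasDerivAt hder hint
  simp only [one_smul, zero_smul, add_zero] at hftc
  set ψ : ℝ → ℝ := fun s => ⟪gradient f x, d⟫ + C * ‖d‖ ^ 2 * s with hψ
  have hψint : IntervalIntegrable ψ MeasureTheory.volume 0 1 :=
    (by continuity : Continuous ψ).intervalIntegrable 0 1
  have hmono : ∀ s ∈ Set.Icc (0:ℝ) 1, φ' s ≤ ψ s := by
    intro s hs
    have h1 : φ' s = ⟪gradient f x, d⟫ + ⟪gradient f (x + s • d) - gradient f x, d⟫ := by
      simp [hφ', inner_sub_left]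
    have hψs : ψ s = ⟪gradient f x, d⟫ + C * ‖d‖ ^ 2 * s := rfl
    rw [h1, hψs]
    have h2 : ⟪gradient f (x + s • d) - gradient f x, d⟫
        ≤ ‖gradient f (x + s • d) - gradient f x‖ * ‖d‖ := real_inner_le_norm _ _
    have h3 : ‖gradient f (x + s • d) - gradient f x‖ ≤ C * (s * ‖d‖) := by
      have := hlip (x + s • d) x
      simpa [norm_smul, abs_of_nonneg hs.1] using this
    have h4 : ‖gradient f (x + s • d) - gradient f x‖ * ‖d‖ ≤ C * (s * ‖d‖) * ‖d‖ :=
      mul_le_mul_of_nonneg_right h3 (norm_nonneg _)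
    have h5 := h2.trans h4
    nlinarith [norm_nonneg d]
  have hle : ∫ s in (0:ℝ)..1, φ' s ≤ ∫ s in (0:ℝ)..1, ψ s :=
    intervalIntegral.integral_mono_on zero_le_one hint hψint hmono
  have hψval : ∫ s in (0:ℝ)..1, ψ s = ⟪gradient f x, d⟫ + C / 2 * ‖d‖ ^ 2 := by
    have heq : ∀ s : ℝ, ψ s = ⟪gradient f x, d⟫ + C * ‖d‖ ^ 2 * s := fun s => rfl
    rw [intervalIntegral.integral_congr (g := fun s => ⟪gradient f x, d⟫ + C * ‖d‖ ^ 2 * s)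
      (fun s _ => heq s)]
    rw [intervalIntegral.integral_add intervalIntegrable_const
      ((Continuous.intervalIntegrable (by fun_prop) 0 1 :
        IntervalIntegrable (fun s : ℝ => C * ‖d‖ ^ 2 * s) MeasureTheory.volume 0 1)),
      intervalIntegral.integral_const_mul, integral_id]
    simp
    ring
  rw [hftc, hψval] at hle
  have hxd : x + d = y := by simp [hd]
  rw [hxd] at hle
  linarith [hle]

end aux

/-- per-iteration bound: for convex differentiable `f` with `C`-Lipschitz gradient,
step size `0 < t ≤ 1/C` and a minimizer `x*`, the gradient step `x⁺ = x − t∇f(x)` satisfies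
`f(x⁺) − f(x*) ≤ (1/(2t)) (‖x − x*‖² − ‖x⁺ − x*‖²)`. -/
theorem gradient_step_telescoping_bound
    {E : Type*} [NormedAddCommGroup E] [InnerProductSpace ℝ E] [CompleteSpace E]
    (f : E → ℝ) (hconv : ConvexOn ℝ Set.univ f) (hdiff : Differentiable ℝ f)
    (C : ℝ) (hC : 0 < C)
    (hlip : ∀ x y : E, ‖gradient f x - gradient f y‖ ≤ C * ‖x - y‖)
    (t : ℝ) (ht : 0 < t) (htC : t ≤ 1 / C)
    (xstar : E) (hmin : ∀ y : E, f xstar ≤ f y) :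
    ∀ x : E, f (x - t • gradient f x) - f xstar
      ≤ 1 / (2 * t) * (‖x - xstar‖ ^ 2 - ‖x - t • gradient f x - xstar‖ ^ 2) := by
  intro x
  set g := gradient f x with hg
  set xp := x - t • g with hxp
  have htC' : C * t ≤ 1 := by
    rw [le_div_iff₀ hC] at htC; linarith
  -- descent lemma at y = xp
  have hdes := descent f hdiff C hC.le hlip x xp
  have h1 : xp - x = -(t • g) := by rw [hxp]; abel
  have h2 : ⟪g, xp - x⟫ = -(t * ‖g‖ ^ 2) := by
    rw [h1, inner_neg_right, real_inner_smul_right, real_inner_self_eq_norm_sq]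
  have h3 : ‖xp - x‖ ^ 2 = t ^ 2 * ‖g‖ ^ 2 := by
    rw [h1, norm_neg, norm_smul, Real.norm_eq_abs, abs_of_nonneg ht.le, mul_pow]
  rw [h2, h3] at hdes
  -- f xp ≤ f x - t/2 ‖g‖^2
  have hgsq : (0:ℝ) ≤ ‖g‖ ^ 2 := sq_nonneg _
  have hdes2 : f xp ≤ f x - t / 2 * ‖g‖ ^ 2 := by nlinarith
  -- convexity at z = xstar
  have hcvx := convex_lower f hconv hdiff x xstar
  -- combine
  have hkey : f xp - f xstar ≤ ⟪g, x - xstar⟫ - t / 2 * ‖g‖ ^ 2 := by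
    have : ⟪g, xstar - x⟫ = -⟪g, x - xstar⟫ := by
      rw [← inner_neg_right]; congr 1; abel
    rw [this] at hcvx
    linarith
  -- norm identity
  have hid : ‖x - xstar‖ ^ 2 - ‖xp - xstar‖ ^ 2
      = 2 * t * ⟪g, x - xstar⟫ - t ^ 2 * ‖g‖ ^ 2 := by
    have hxp2 : xp - xstar = (x - xstar) - t • g := by rw [hxp]; abel
    have hn : ‖xp - xstar‖ ^ 2
        = ‖x - xstar‖ ^ 2 - 2 * (t * ⟪x - xstar, g⟫) + t ^ 2 * ‖g‖ ^ 2 := by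
      rw [hxp2, norm_sub_sq_real, real_inner_smul_right, norm_smul, Real.norm_eq_abs,
        abs_of_nonneg ht.le, mul_pow]
    have hcomm : ⟪x - xstar, g⟫ = ⟪g, x - xstar⟫ := real_inner_comm _ _
    rw [hn, hcomm]; ring
  rw [hid]
  have h2t : (0:ℝ) < 2 * t := by linarith
  rw [div_mul_eq_mul_div, le_div_iff₀ h2t]
  nlinarith [hkey]
end
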